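/- Let k, s, τ⁻, τ⁺, F be real numbers with k > 0, 0 ≤ s ≤ k, τ⁻ ≥ 0, τ⁺ ≥ 0, and F ≥ k·τ⁻ + s·τ⁺. Then for every x with 0 ≤ x < k, g(x) ≥ min(F − k·τ⁻, (1 − exp((s−k)/k))·F + exp((s−k)/k)·s·τ⁺); that is, the infimum of g over [0, k] is attained (in the limit) at one of the two endpoints, with values g(k) = F − k·τ⁻ and g(0) = (1 − exp((s−k)/k))·F + exp((s−k)/k)·s·τ⁺. -/

import Mathlib

open Real

lemma aux1 (t : ℝ) : (1 - t) * Real.exp t ≤ 1 := by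
  have h : 1 - t ≤ Real.exp (-t) := by linarith [Real.add_one_le_exp (-t)]
  calc (1 - t) * Real.exp t ≤ Real.exp (-t) * Real.exp t :=
        mul_le_mul_of_nonneg_right h (Real.exp_pos t).le
    _ = 1 := by rw [← Real.exp_add]; simp

lemma hd2 (x : ℝ) : HasDerivAt (fun x : ℝ => (x - 2) * Real.exp x + x + 2)
    ((x - 1) * Real.exp x + 1) x := by
  have h : HasDerivAt (fun x : ℝ => (x - 2) * Real.exp x + x + 2)
      ((1 * Real.exp x + (x - 2) * Real.exp x) + 1) x := by
    have h1 : HasDerivAt (fun x : ℝ => x - 2) 1 x := (hasDerivAt_id x).sub_const 2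
    exact ((h1.mul (Real.hasDerivAt_exp x)).add (hasDerivAt_id x)).add_const 2
  convert h using 1; ring

lemma aux2 (t : ℝ) (ht : 0 ≤ t) : 0 ≤ (t - 2) * Real.exp t + t + 2 := by
  have mono : MonotoneOn (fun x : ℝ => (x - 2) * Real.exp x + x + 2) (Set.Ici 0) := by
    apply monotoneOn_of_deriv_nonneg (convex_Ici 0)
    · exact (Continuous.continuousOn (by continuity))
    · intro x hx
      exact (hd2 x).differentiableAt.differentiableWithinAt
    · intro x hx
      rw [(hd2 x).deriv]
      nlinarith [aux1 x, Real.exp_pos x]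
  have := mono (Set.mem_Ici.mpr (le_refl (0:ℝ))) (Set.mem_Ici.mpr ht) ht
  simpa using this

lemma hdR (x : ℝ) (hx : x ≠ 0) : HasDerivAt (fun x : ℝ => (Real.exp x - x - 1) / x ^ 2)
    (((Real.exp x - 1) * x ^ 2 - (Real.exp x - x - 1) * (2 * x)) / (x ^ 2) ^ 2) x := by
  have h1 : HasDerivAt (fun x : ℝ => Real.exp x - x - 1) (Real.exp x - 1) x := by
    have := ((Real.hasDerivAt_exp x).sub (hasDerivAt_id x)).sub_const 1
    simpa using this
  have h2 : HasDerivAt (fun x : ℝ => x ^ 2) (2 * x) x := by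
    simpa using (hasDerivAt_pow 2 x)
  exact h1.div h2 (pow_ne_zero 2 hx)

lemma auxA (t u : ℝ) (ht : 0 < t) (htu : t ≤ u) :
    (Real.exp t - t - 1) * u ^ 2 ≤ (Real.exp u - u - 1) * t ^ 2 := by
  have mono : MonotoneOn (fun x : ℝ => (Real.exp x - x - 1) / x ^ 2) (Set.Ioi 0) := by
    apply monotoneOn_of_deriv_nonneg (convex_Ioi 0)
    · intro x hx
      have hx0 : x ≠ 0 := ne_of_gt hx
      exact ((hdR x hx0).differentiableAt.differentiableWithinAt).continuousWithinAt
    · intro x hx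
      rw [interior_Ioi] at hx
      exact (hdR x (ne_of_gt hx)).differentiableAt.differentiableWithinAt
    · intro x hx
      rw [interior_Ioi] at hx
      have hx0 : (0:ℝ) < x := hx
      rw [(hdR x (ne_of_gt hx0)).deriv]
      apply div_nonneg _ (by positivity)
      have h := aux2 x hx0.le
      nlinarith [h, hx0]
  have hu : (0:ℝ) < u := lt_of_lt_of_le ht htu
  have := mono (Set.mem_Ioi.mpr ht) (Set.mem_Ioi.mpr hu) htu
  rw [div_le_div_iff₀ (by positivity) (by positivity)] at this
  linarith

lemma hdq (A x : ℝ) (hx : x ≠ 0) :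
    HasDerivAt (fun x : ℝ => A * Real.exp (-x) - (1 - Real.exp (-x)) / x)
      (A * (-Real.exp (-x)) - (Real.exp (-x) * x - (1 - Real.exp (-x)) * 1) / x ^ 2) x := by
  have hexp : HasDerivAt (fun x : ℝ => Real.exp (-x)) (-Real.exp (-x)) x := by
    have := ((hasDerivAt_id x).neg).exp
    simpa [mul_comm] using this
  have h1 : HasDerivAt (fun x : ℝ => A * Real.exp (-x)) (A * (-Real.exp (-x))) x :=
    hexp.const_mul A
  have hnum : HasDerivAt (fun x : ℝ => 1 - Real.exp (-x)) (Real.exp (-x)) x := by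
    have := (hasDerivAt_const x (1:ℝ)).sub hexp
    simp only [sub_neg_eq_add, zero_add] at this; exact this
  have h2 : HasDerivAt (fun x : ℝ => (1 - Real.exp (-x)) / x)
      ((Real.exp (-x) * x - (1 - Real.exp (-x)) * 1) / x ^ 2) x :=
    hnum.div (hasDerivAt_id x) hx
  exact h1.sub h2

lemma auxB (a u : ℝ) (ha : 0 < a) (hau : a ≤ u) :
    (1 - Real.exp (-a)) / a - (1 - Real.exp (-u)) / u ≤
      (Real.exp u - u - 1) / u ^ 2 * (Real.exp (-a) - Real.exp (-u)) := by
  have hu : (0:ℝ) < u := lt_of_lt_of_le ha hau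
  set A := (Real.exp u - u - 1) / u ^ 2 with hAdef
  have anti : AntitoneOn (fun x : ℝ => A * Real.exp (-x) - (1 - Real.exp (-x)) / x)
      (Set.Icc a u) := by
    apply antitoneOn_of_deriv_nonpos (convex_Icc a u)
    · intro x hx
      have hx0 : x ≠ 0 := ne_of_gt (lt_of_lt_of_le ha hx.1)
      exact ((hdq A x hx0).differentiableAt.differentiableWithinAt).continuousWithinAt
    · intro x hx
      rw [interior_Icc] at hx
      exact (hdq A x (ne_of_gt (lt_of_lt_of_le ha hx.1.le))).differentiableAt.differentiableWithinAt
    · intro x hx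
      rw [interior_Icc] at hx
      have hx0 : (0:ℝ) < x := lt_of_lt_of_le ha hx.1.le
      rw [(hdq A x (ne_of_gt hx0)).deriv]
      have hAx : Real.exp x - x - 1 ≤ A * x ^ 2 := by
        rw [hAdef, div_mul_eq_mul_div, le_div_iff₀ (by positivity)]
        nlinarith [auxA x u hx0 hx.2.le]
      have hE : Real.exp (-x) * Real.exp x = 1 := by rw [← Real.exp_add]; simp
      have hmul := mul_le_mul_of_nonneg_right hAx (Real.exp_pos (-x)).le
      rw [sub_nonpos, le_div_iff₀ (by positivity : (0:ℝ) < x ^ 2)]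
      nlinarith [hmul, hE]
  have h := anti (Set.mem_Icc.mpr ⟨le_refl a, hau⟩) (Set.mem_Icc.mpr ⟨hau, le_refl u⟩) hau
  simp only at h
  linarith

theorem bound_min_at_endpoints (k s τm τp F : ℝ) (hk : 0 < k)
    (hs0 : 0 ≤ s) (hsk : s ≤ k) (hτm : 0 ≤ τm) (hτp : 0 ≤ τp)
    (hF : k * τm + s * τp ≤ F) :
    ∀ x : ℝ, 0 ≤ x → x < k →
      min (F - k * τm) ((1 - Real.exp ((s - k) / k)) * F + Real.exp ((s - k) / k) * s * τp)
        ≤ (1 - Real.exp (-(k - s) / (k - x))) * (F - x * τm)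
          + Real.exp (-(k - s) / (k - x)) * s * τp := by
  intro x hx0 hxk
  rcases eq_or_lt_of_le hsk with hse | hsl
  · -- s = k
    subst hse
    simp only [sub_self, zero_div, Real.exp_zero, neg_zero]
    calc min (F - s * τm) (0 * F + 1 * s * τp) ≤ 0 * F + 1 * s * τp :=
          min_le_right _ _
      _ = 0 * (F - x * τm) + 1 * s * τp := by ring
  · -- s < k
    have hc : (0:ℝ) < k - s := by linarith
    have hyx : (0:ℝ) < k - x := by linarith
    set u0 : ℝ := (k - s) / k with hu0def
    set u : ℝ := (k - s) / (k - x) with hudef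
    have hu0pos : 0 < u0 := div_pos hc hk
    have hupos : 0 < u := div_pos hc hyx
    have hu0u : u0 ≤ u := by
      rw [hu0def, hudef]
      gcongr <;> linarith
    have eg1 : (s - k) / k = -u0 := by rw [hu0def, ← neg_div]; congr 1; ring
    have eg2 : -(k - s) / (k - x) = -u := by rw [hudef, neg_div]
    rw [eg1, eg2]
    have hcu : u * (k - x) = k - s := div_mul_cancel₀ _ (ne_of_gt hyx)
    have hcu0 : u0 * k = k - s := div_mul_cancel₀ _ (ne_of_gt hk)
    have hE0E : Real.exp (-u) ≤ Real.exp (-u0) := Real.exp_le_exp.mpr (neg_le_neg hu0u)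
    have hEmul : Real.exp (-u) * Real.exp u = 1 := by rw [← Real.exp_add]; simp
    rcases le_or_gt (u * (F - k * τm - s * τp)) ((k - x) * τm * (Real.exp u - u - 1))
      with hc1 | hc2
    · -- close to right endpoint: value ≥ F - k τm
      refine le_trans (min_le_left _ _) ?_
      have h2 : Real.exp u - u - 1 ≤ u * (Real.exp u - 1) := by nlinarith [aux1 u]
      have hyτ : (0:ℝ) ≤ (k - x) * τm := mul_nonneg (by linarith) hτm
      have h3 : u * (F - k * τm - s * τp) ≤ (k - x) * τm * (u * (Real.exp u - 1)) :=
        le_trans hc1 (by nlinarith [hyτ])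
      have hBle : F - k * τm - s * τp ≤ (k - x) * τm * (Real.exp u - 1) := by
        nlinarith [hupos]
      have hsum : F - x * τm - s * τp ≤ (k - x) * τm * Real.exp u := by nlinarith [hBle]
      have hstep : Real.exp (-u) * (F - x * τm - s * τp) ≤ (k - x) * τm := by
        have hm := mul_le_mul_of_nonneg_left hsum (Real.exp_pos (-u)).le
        calc Real.exp (-u) * (F - x * τm - s * τp)
            ≤ Real.exp (-u) * ((k - x) * τm * Real.exp u) := hm
          _ = (k - x) * τm * (Real.exp (-u) * Real.exp u) := by ring
          _ = (k - x) * τm := by rw [hEmul]; ring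
      linarith [hstep]
    · -- close to left endpoint: value ≥ g(0)
      refine le_trans (min_le_right _ _) ?_
      have hBge : (k - s) * τm * (Real.exp u - u - 1) ≤ (F - k * τm - s * τp) * u ^ 2 := by
        rw [← hcu]
        nlinarith [mul_le_mul_of_nonneg_left hc2.le hupos.le]
      have hBge' : (k - s) * τm * ((Real.exp u - u - 1) / u ^ 2) ≤ F - k * τm - s * τp := by
        rw [show (k - s) * τm * ((Real.exp u - u - 1) / u ^ 2)
            = ((k - s) * τm * (Real.exp u - u - 1)) / u ^ 2 from by ring,
          div_le_iff₀ (by positivity)]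
        exact hBge
      have hkeyB := auxB u0 u hu0pos hu0u
      have hm1 := mul_le_mul_of_nonneg_left hkeyB (mul_nonneg hc.le hτm)
      have hm2 : (k - s) * τm * ((Real.exp u - u - 1) / u ^ 2) * (Real.exp (-u0) - Real.exp (-u))
          ≤ (F - k * τm - s * τp) * (Real.exp (-u0) - Real.exp (-u)) :=
        mul_le_mul_of_nonneg_right hBge' (sub_nonneg.mpr hE0E)
      have d1 : (k - s) / u0 = k := by rw [div_eq_iff (ne_of_gt hu0pos)]; linarith [hcu0]
      have d2 : (k - s) / u = k - x := by rw [div_eq_iff (ne_of_gt hupos)]; linarith [hcu]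
      have hdiv1 : (k - s) * τm * ((1 - Real.exp (-u0)) / u0 - (1 - Real.exp (-u)) / u)
          = k * τm * (1 - Real.exp (-u0)) - (k - x) * τm * (1 - Real.exp (-u)) := by
        rw [show (k - s) * τm * ((1 - Real.exp (-u0)) / u0 - (1 - Real.exp (-u)) / u)
            = τm * ((k - s) / u0 * (1 - Real.exp (-u0)) - (k - s) / u * (1 - Real.exp (-u)))
            from by ring, d1, d2]
        ring
      have key2 : k * τm * (1 - Real.exp (-u0)) - (k - x) * τm * (1 - Real.exp (-u))
          ≤ (F - k * τm - s * τp) * (Real.exp (-u0) - Real.exp (-u)) := by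
        calc k * τm * (1 - Real.exp (-u0)) - (k - x) * τm * (1 - Real.exp (-u))
            = (k - s) * τm * ((1 - Real.exp (-u0)) / u0 - (1 - Real.exp (-u)) / u) :=
              hdiv1.symm
          _ ≤ (k - s) * τm * ((Real.exp u - u - 1) / u ^ 2
                * (Real.exp (-u0) - Real.exp (-u))) := hm1
          _ = (k - s) * τm * ((Real.exp u - u - 1) / u ^ 2)
                * (Real.exp (-u0) - Real.exp (-u)) := by ring
          _ ≤ (F - k * τm - s * τp) * (Real.exp (-u0) - Real.exp (-u)) := hm2
      linarith [key2]
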